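/- Let e={u,v} be an edge of a finite simple undirected graph G. The number of unordered pairs {v1,v2} ⊆ adj({u,v}) such that the subgraph induced on {u,v,v1,v2} is the path v1–u–v–v2 (an induced P4 with {u,v} as its central edge) equals n_x·n_y − m(X,Y) (Theorem 2, Table 3, P4 row). -/

import Mathlib

open Finset

variable {V : Type*}

/-- `X` for edge `{u,v}`: neighbors of `u` other than `v` that are not neighbors of `v`. -/
def eX [Fintype V] [DecidableEq V] (G : SimpleGraph V) [DecidableRel G.Adj] (u v : V) :
    Finset V :=
  univ.filter fun w => w ≠ v ∧ G.Adj u w ∧ ¬ G.Adj v w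

/-- `Y` for edge `{u,v}`: neighbors of `v` other than `u` that are not neighbors of `u`. -/
def eY [Fintype V] [DecidableEq V] (G : SimpleGraph V) [DecidableRel G.Adj] (u v : V) :
    Finset V :=
  univ.filter fun w => w ≠ u ∧ G.Adj v w ∧ ¬ G.Adj u w

/-- `Z` for edge `{u,v}`: common neighbors of `u` and `v`. -/
def eZ [Fintype V] [DecidableEq V] (G : SimpleGraph V) [DecidableRel G.Adj] (u v : V) :
    Finset V :=
  univ.filter fun w => G.Adj u w ∧ G.Adj v w

/-- `m(S,T)`: the number of edges of `G` with one endpoint in `S` and the other in `T`. -/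
def mE [DecidableEq V] (G : SimpleGraph V) [DecidableRel G.Adj] (S T : Finset V) : ℕ :=
  (((S ×ˢ T).filter fun p => G.Adj p.1 p.2).image fun p => ({p.1, p.2} : Finset V)).card

/-- `adj(W)`: vertices outside `W` having a neighbor in `W`. -/
def adjW [Fintype V] [DecidableEq V] (G : SimpleGraph V) [DecidableRel G.Adj] (W : Finset V) :
    Finset V :=
  univ.filter fun x => x ∉ W ∧ ∃ w ∈ W, G.Adj x w

lemma mem_eX_iff [Fintype V] [DecidableEq V] (G : SimpleGraph V) [DecidableRel G.Adj]
    (u v w : V) : w ∈ eX G u v ↔ w ≠ v ∧ G.Adj u w ∧ ¬ G.Adj v w := by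
  simp [eX]

lemma mem_eY_iff [Fintype V] [DecidableEq V] (G : SimpleGraph V) [DecidableRel G.Adj]
    (u v w : V) : w ∈ eY G u v ↔ w ≠ u ∧ G.Adj v w ∧ ¬ G.Adj u w := by
  simp [eY]

lemma eXY_injOn [Fintype V] [DecidableEq V] (G : SimpleGraph V) [DecidableRel G.Adj]
    (u v : V) (P : V × V → Prop) [DecidablePred P] :
    Set.InjOn (fun p : V × V => ({p.1, p.2} : Finset V))
      (((eX G u v) ×ˢ (eY G u v)).filter P) := by
  intro p hp q hq h
  simp only [coe_filter, Set.mem_setOf_eq, mem_product] at hp hq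
  obtain ⟨⟨hp1, hp2⟩, -⟩ := hp
  obtain ⟨⟨hq1, hq2⟩, -⟩ := hq
  rw [mem_eX_iff] at hp1 hq1
  rw [mem_eY_iff] at hp2 hq2
  simp only at h
  have h1 : p.1 ∈ ({q.1, q.2} : Finset V) := by rw [← h]; simp
  have h2 : p.2 ∈ ({q.1, q.2} : Finset V) := by rw [← h]; simp
  simp only [mem_insert, mem_singleton] at h1 h2
  have e1 : p.1 = q.1 := by
    rcases h1 with h1 | h1
    · exact h1
    · exact absurd (h1 ▸ hq2.2.1) hp1.2.2
  have e2 : p.2 = q.2 := by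
    rcases h2 with h2 | h2
    · exact absurd (h2 ▸ hq1.2.2) (by exact fun hh => hh hp2.2.1)
    · exact h2
  exact Prod.ext e1 e2

theorem stmt7 [Fintype V] [DecidableEq V] (G : SimpleGraph V) [DecidableRel G.Adj]
    (u v : V) (huv : G.Adj u v) :
    ((((adjW G {u, v}) ×ˢ (adjW G {u, v})).filter fun p =>
        p.1 ≠ p.2 ∧
        ((G.Adj u p.1 ∧ G.Adj v p.2 ∧ ¬ G.Adj u p.2 ∧ ¬ G.Adj v p.1 ∧ ¬ G.Adj p.1 p.2) ∨
         (G.Adj u p.2 ∧ G.Adj v p.1 ∧ ¬ G.Adj u p.1 ∧ ¬ G.Adj v p.2 ∧ ¬ G.Adj p.1 p.2))).image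
      fun p => ({p.1, p.2} : Finset V)).card
      = ((eX G u v).card : ℤ) * (eY G u v).card - mE G (eX G u v) (eY G u v) := by
  have huv' : u ≠ v := G.ne_of_adj huv
  -- the LHS image equals the image of the non-adjacent pairs in X × Y
  have himg :
      ((((adjW G {u, v}) ×ˢ (adjW G {u, v})).filter fun p =>
        p.1 ≠ p.2 ∧
        ((G.Adj u p.1 ∧ G.Adj v p.2 ∧ ¬ G.Adj u p.2 ∧ ¬ G.Adj v p.1 ∧ ¬ G.Adj p.1 p.2) ∨
         (G.Adj u p.2 ∧ G.Adj v p.1 ∧ ¬ G.Adj u p.1 ∧ ¬ G.Adj v p.2 ∧ ¬ G.Adj p.1 p.2))).image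
        fun p => ({p.1, p.2} : Finset V))
      = (((eX G u v) ×ˢ (eY G u v)).filter fun p => ¬ G.Adj p.1 p.2).image
        fun p => ({p.1, p.2} : Finset V) := by
    ext s
    simp only [mem_image, mem_filter, mem_product, adjW, mem_insert, mem_singleton,
      mem_eX_iff, mem_eY_iff, Finset.mem_filter, Finset.mem_univ, true_and]
    constructor
    · rintro ⟨⟨a, b⟩, ⟨⟨⟨ha1, -⟩, ⟨hb1, -⟩⟩, hne, hcase⟩, rfl⟩
      push_neg at ha1 hb1
      rcases hcase with ⟨h1, h2, h3, h4, h5⟩ | ⟨h1, h2, h3, h4, h5⟩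
      · exact ⟨(a, b), ⟨⟨⟨ha1.2, h1, h4⟩, hb1.1, h2, h3⟩, h5⟩, rfl⟩
      · refine ⟨(b, a), ⟨⟨⟨hb1.2, h1, h4⟩, ha1.1, h2, h3⟩, fun h => h5 h.symm⟩, ?_⟩
        simp [Finset.pair_comm]
    · rintro ⟨⟨a, b⟩, ⟨⟨⟨ha1, ha2, ha3⟩, hb1, hb2, hb3⟩, hnadj⟩, rfl⟩
      refine ⟨(a, b), ⟨⟨⟨?_, u, by simp, ha2.symm⟩, ?_, v, by simp, hb2.symm⟩, ?_, ?_⟩, rfl⟩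
      · push_neg
        exact ⟨fun h => G.loopless.irrefl u (h ▸ ha2), ha1⟩
      · push_neg
        exact ⟨hb1, fun h => G.loopless.irrefl v (h ▸ hb2)⟩
      · intro h; exact ha3 (h ▸ hb2)
      · exact Or.inl ⟨ha2, hb2, hb3, ha3, hnadj⟩
  rw [himg]
  rw [Finset.card_image_of_injOn (eXY_injOn G u v _)]
  have hmE : (mE G (eX G u v) (eY G u v) : ℤ)
      = ((((eX G u v) ×ˢ (eY G u v)).filter fun p => G.Adj p.1 p.2).card : ℤ) := by
    unfold mE
    rw [Finset.card_image_of_injOn (eXY_injOn G u v _)]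
  rw [hmE]
  have hsplit := Finset.card_filter_add_card_filter_not
    (s := (eX G u v) ×ˢ (eY G u v)) (p := fun p => G.Adj p.1 p.2)
  rw [Finset.card_product] at hsplit
  omega
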